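/- arXiv:1409.2597 — 3 statements merged into one kernel-verified Lean document; each statement's English description precedes it below -/
import Mathlib

section
/- Suppose a buyer's value distribution on [0, v̄] has affine virtual value φ(v) = αv - β with α > 1, β > 0, and the seller bids the BNE price P = P(c) satisfying φ(P) = (c+β)/α. Then the conditional maximum surplus E[(v-c)·1{v≥c} | c] equals α^{(α+1)/(α-1)} times the conditional revenue w(P)(1-F(P)) of the fee schedule w(P) = P - φ(P). Hence the fee-setting mechanism's revenue is exactly a 1/α^{(α+1)/(α-1)} fraction of maximum surplus, conditionally on every c. -/
open MeasureTheory Set intervalIntegral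

/-- Conditional maximum surplus equals α^{(α+1)/(α-1)} times the
affine fee-setting mechanism's conditional revenue. -/
theorem stmt8 (α β vbar c P : ℝ) (F f : ℝ → ℝ)
    (hα : 1 < α) (hβ : 0 < β) (hvbar : vbar = β/(α-1)) (hc : 0 ≤ c)
    (hsurv : ∀ v ∈ Set.Icc (0:ℝ) vbar, 1 - F v = (((1-α)*v + β)/β) ^ (1/(α-1)))
    (hf : ∀ v ∈ Set.Icc (0:ℝ) vbar, HasDerivWithinAt F (f v) (Set.Icc 0 vbar) v)
    (hfpos : ∀ v ∈ Set.Icc (0:ℝ) vbar, 0 ≤ f v)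
    (hP : P ∈ Set.Icc (0:ℝ) vbar) (hPc : α*P - β = (c+β)/α) :
    (∫ v in (0:ℝ)..vbar, max (v - c) 0 * f v)
      = α ^ ((α+1)/(α-1)) * (((1-α)*P + β) * (1 - F P)) := by
  have hα0 : (0:ℝ) < α := lt_trans one_pos hα
  have hα1 : (0:ℝ) < α - 1 := by linarith
  set s : ℝ := 1/(α-1) with hs
  set σ : ℝ := α/(α-1) with hσ
  have hs0 : 0 < s := by positivity
  have hσ0 : 0 < σ := by positivity
  have hσs : σ = s + 1 := by rw [hσ, hs]; field_simp; ring
  have hvb0 : 0 < vbar := by rw [hvbar]; positivity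
  have hαP : α ≠ 0 := ne_of_gt hα0
  have hwP : 0 ≤ (1-α)*P + β := by
    have h2 := hP.2
    rw [hvbar] at h2
    have : (α-1)*P ≤ β := by
      calc (α-1)*P ≤ (α-1)*(β/(α-1)) := by nlinarith
        _ = β := by field_simp
    linarith
  have hwc : (1-α)*c + β = α^2 * ((1-α)*P + β) := by
    have : c = α^2*P - β*α - β := by
      field_simp at hPc; nlinarith [hPc]
    rw [this]; ring
  have hcvb : c ≤ vbar := by
    have h1 : 0 ≤ (1-α)*c + β := by rw [hwc]; positivity
    rw [hvbar, le_div_iff₀ hα1]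
    nlinarith
  -- F vbar = 1
  have huvb : (1-α)*vbar + β = 0 := by rw [hvbar]; field_simp; ring
  have hFvbar : F vbar = 1 := by
    have h := hsurv vbar ⟨le_of_lt hvb0, le_refl _⟩
    rw [huvb, zero_div, Real.zero_rpow (ne_of_gt hs0)] at h
    linarith
  -- u positive in interior
  have hupos : ∀ x ∈ Set.Ioo (0:ℝ) vbar, 0 < (1-α)*x + β := by
    intro x hx
    have h2 := hx.2
    rw [hvbar, lt_div_iff₀ hα1] at h2
    nlinarith
  -- explicit f on interior
  have hfeq : ∀ x ∈ Set.Ioo (0:ℝ) vbar, f x = (1/β) * (((1-α)*x+β)/β) ^ (s-1) := by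
    intro x hx
    have hmem : Set.Icc (0:ℝ) vbar ∈ nhds x := Icc_mem_nhds hx.1 hx.2
    have hFx : HasDerivAt F (f x) x := (hf x (Set.mem_Icc_of_Ioo hx)).hasDerivAt hmem
    have hux : 0 < (1-α)*x + β := hupos x hx
    have hinner : HasDerivAt (fun v : ℝ => ((1-α)*v+β)/β) ((1-α)/β) x := by
      have : HasDerivAt (fun v : ℝ => ((1-α)*v+β)/β) ((1-α)*1/β) x := by
        exact (((hasDerivAt_id x).const_mul (1-α)).add_const β).div_const β
      simpa using this
    have hG : HasDerivAt (fun v : ℝ => 1 - (((1-α)*v+β)/β) ^ s)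
        (-(((1-α)/β) * s * (((1-α)*x+β)/β) ^ (s-1))) x := by
      exact (hinner.rpow_const (Or.inl (by positivity))).const_sub 1
    have hEq : (fun v : ℝ => 1 - (((1-α)*v+β)/β) ^ s) =ᶠ[nhds x] F := by
      filter_upwards [hmem] with v hv
      have := hsurv v hv
      linarith
    have := hFx.unique (hEq.hasDerivAt_iff.1 hG)
    rw [this]
    rw [hs]
    have h1 : -((1-α)/β * (1/(α-1)) * (((1-α)*x+β)/β) ^ (1/(α-1)-1))
        = (1/β) * (((1-α)*x+β)/β) ^ (1/(α-1)-1) := by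
      field_simp
      ring
    rw [h1]
  -- integrability of explicit integrand on [c, vbar]
  have hβne : β ≠ 0 := ne_of_gt hβ
  have hkne : (1-α)/β ≠ 0 := by
    apply div_ne_zero _ hβne; linarith
  have hint_g : IntervalIntegrable
      (fun v => (v - c) * ((1/β) * (((1-α)*v+β)/β) ^ (s-1))) volume c vbar := by
    have h1 : IntervalIntegrable (fun x : ℝ => x ^ (s-1)) volume
        (((1-α)/β*c+1)) (((1-α)/β*vbar+1)) := intervalIntegral.intervalIntegrable_rpow' (by linarith)
    have h2 := (h1.comp_add_right 1).comp_mul_left (c := (1-α)/β)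
    have h3 : IntervalIntegrable (fun v : ℝ => ((1-α)/β*v+1) ^ (s-1)) volume c vbar := by
      have h1α : (1-α) ≠ 0 := by linarith
      have e1 : ((1-α)/β*c+1-1)/((1-α)/β) = c := by
        field_simp; ring
      have e2 : ((1-α)/β*vbar+1-1)/((1-α)/β) = vbar := by
        field_simp; ring
      rw [e1, e2] at h2
      exact h2
    have h4 : (fun v : ℝ => ((1-α)/β*v+1) ^ (s-1))
        = fun v : ℝ => (((1-α)*v+β)/β) ^ (s-1) := by
      funext v; congr 1; field_simp
    rw [h4] at h3
    have h5 := h3.continuousOn_mul (g := fun v => (v - c) * (1/β))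
      (by fun_prop)
    have h6 : (fun v : ℝ => (v - c) * ((1/β) * (((1-α)*v+β)/β) ^ (s-1)))
        = (fun x : ℝ => (fun v => (v - c) * (1/β)) x * (((1-α)*x+β)/β) ^ (s-1)) := by
      funext x; ring
    rw [h6]; exact h5
  -- a.e. equality on Ioc c vbar
  have hne_vbar : ∀ᵐ x : ℝ, x ≠ vbar := by
    refine MeasureTheory.ae_iff.2 ?_
    simp only [ne_eq, not_not, Set.setOf_eq_eq_singleton]
    exact measure_singleton vbar
  have hae : (fun v => (v - c) * f v)
      =ᵐ[volume.restrict (Set.Ioc c vbar)]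
      (fun v => (v - c) * ((1/β) * (((1-α)*v+β)/β) ^ (s-1))) := by
    filter_upwards [MeasureTheory.ae_restrict_mem measurableSet_Ioc,
      MeasureTheory.ae_restrict_of_ae hne_vbar] with x hx hxne
    have hxI : x ∈ Set.Ioo (0:ℝ) vbar :=
      ⟨lt_of_le_of_lt hc hx.1, lt_of_le_of_ne hx.2 hxne⟩
    rw [hfeq x hxI]
  have hint_f : IntervalIntegrable (fun v => (v - c) * f v) volume c vbar := by
    rw [intervalIntegrable_iff_integrableOn_Ioc_of_le hcvb]
    exact (((intervalIntegrable_iff_integrableOn_Ioc_of_le hcvb).1 hint_g).congr hae.symm)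
  -- FTC
  have hFcont : ContinuousOn F (Set.Icc 0 vbar) := fun x hx => (hf x hx).continuousWithinAt
  have hFTC : (∫ v in c..vbar, (v - c) * f v)
      = (β/α) * (((1-α)*c+β)/β) ^ σ := by
    set H : ℝ → ℝ := fun v => (v - c) * (F v - 1) - (β/α) * (((1-α)*v+β)/β) ^ σ with hH
    have hsub : Set.Icc c vbar ⊆ Set.Icc 0 vbar := Set.Icc_subset_Icc hc le_rfl
    have hHcont : ContinuousOn H (Set.Icc c vbar) := by
      apply ContinuousOn.sub
      · exact (continuousOn_id.sub continuousOn_const).mul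
          ((hFcont.mono hsub).sub continuousOn_const)
      · apply ContinuousOn.mul continuousOn_const
        apply ContinuousOn.rpow_const (by fun_prop)
        intro x _; right; exact le_of_lt hσ0
    have hHderiv : ∀ x ∈ Set.Ioo c vbar, HasDerivWithinAt H ((x - c) * f x) (Set.Ioi x) x := by
      intro x hx
      have hxI : x ∈ Set.Ioo (0:ℝ) vbar := ⟨lt_of_le_of_lt hc hx.1, hx.2⟩
      have hmem : Set.Icc (0:ℝ) vbar ∈ nhds x := Icc_mem_nhds hxI.1 hxI.2
      have hFx : HasDerivAt F (f x) x := (hf x (Set.mem_Icc_of_Ioo hxI)).hasDerivAt hmem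
      have hux : 0 < (1-α)*x + β := hupos x hxI
      have hinner : HasDerivAt (fun v : ℝ => ((1-α)*v+β)/β) ((1-α)/β) x := by
        have : HasDerivAt (fun v : ℝ => ((1-α)*v+β)/β) ((1-α)*1/β) x :=
          (((hasDerivAt_id x).const_mul (1-α)).add_const β).div_const β
        simpa using this
      have hrpow : HasDerivAt (fun v : ℝ => (β/α) * (((1-α)*v+β)/β) ^ σ)
          ((β/α) * ((1-α)/β * σ * (((1-α)*x+β)/β) ^ (σ-1))) x :=
        (hinner.rpow_const (Or.inl (by positivity))).const_mul (β/α)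
      have hprod : HasDerivAt (fun v : ℝ => (v - c) * (F v - 1))
          (1 * (F x - 1) + (x - c) * f x) x :=
        ((hasDerivAt_id x).sub_const c).mul (hFx.sub_const 1)
      have hHd : HasDerivAt H
          ((1 * (F x - 1) + (x - c) * f x) - (β/α) * ((1-α)/β * σ * (((1-α)*x+β)/β) ^ (σ-1))) x :=
        hprod.sub hrpow
      have hval : (1 * (F x - 1) + (x - c) * f x) - (β/α) * ((1-α)/β * σ * (((1-α)*x+β)/β) ^ (σ-1))
          = (x - c) * f x := by
        have hFxval : F x - 1 = -((((1-α)*x+β)/β) ^ s) := by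
          have := hsurv x (Set.mem_Icc_of_Ioo hxI)
          linarith
        have hσ1 : σ - 1 = s := by rw [hσs]; ring
        rw [hσ1, hFxval]
        have hcoef : (β/α) * ((1-α)/β * σ) = -1 := by
          rw [hσ]; field_simp; ring
        have : (β/α) * ((1-α)/β * σ * (((1-α)*x+β)/β) ^ s)
            = -((((1-α)*x+β)/β) ^ s) := by
          rw [show (β/α) * ((1-α)/β * σ * (((1-α)*x+β)/β) ^ s)
              = ((β/α) * ((1-α)/β * σ)) * (((1-α)*x+β)/β) ^ s by ring, hcoef]
          ring
        rw [this]; ring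
      exact (hval ▸ hHd).hasDerivWithinAt
    have hcalc := intervalIntegral.integral_eq_sub_of_hasDeriv_right_of_le hcvb hHcont hHderiv hint_f
    rw [hcalc, hH]
    simp only
    rw [hFvbar, huvb, zero_div, Real.zero_rpow (ne_of_gt hσ0)]
    ring
  -- split the integral
  have hint1 : IntervalIntegrable (fun v => max (v - c) 0 * f v) volume 0 c := by
    rw [intervalIntegrable_iff_integrableOn_Ioc_of_le hc]
    refine (MeasureTheory.integrableOn_const (C := (0:ℝ)) measure_Ioc_lt_top.ne :
      MeasureTheory.IntegrableOn (fun _ => (0:ℝ)) _ _).congr_fun ?_ measurableSet_Ioc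
    intro x hx
    simp [max_eq_right (by linarith [hx.2] : x - c ≤ 0)]
  have hint2 : IntervalIntegrable (fun v => max (v - c) 0 * f v) volume c vbar := by
    rw [intervalIntegrable_iff_integrableOn_Ioc_of_le hcvb]
    refine ((intervalIntegrable_iff_integrableOn_Ioc_of_le hcvb).1 hint_f).congr_fun ?_ measurableSet_Ioc
    intro x hx
    simp [max_eq_left (by linarith [hx.1] : 0 ≤ x - c)]
  have hzero : (∫ v in (0:ℝ)..c, max (v - c) 0 * f v) = 0 := by
    rw [intervalIntegral.integral_congr (g := fun _ => (0:ℝ)) ?_]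
    · simp
    · intro x hx
      rw [Set.uIcc_of_le hc] at hx
      simp [max_eq_right (by linarith [hx.2] : x - c ≤ 0)]
  have hmax : (∫ v in c..vbar, max (v - c) 0 * f v) = ∫ v in c..vbar, (v - c) * f v := by
    apply intervalIntegral.integral_congr
    intro x hx
    rw [Set.uIcc_of_le hcvb] at hx
    simp [max_eq_left (by linarith [hx.1] : 0 ≤ x - c)]
  have hsplit : (∫ v in (0:ℝ)..vbar, max (v - c) 0 * f v)
      = ∫ v in c..vbar, (v - c) * f v := by
    rw [← intervalIntegral.integral_add_adjacent_intervals hint1 hint2, hzero, zero_add, hmax]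
  rw [hsplit, hFTC, hwc]
  have hFP : 1 - F P = (((1-α)*P+β)/β) ^ s := hsurv P hP
  rw [hFP]
  rcases eq_or_lt_of_le hwP with h0 | h0
  · rw [← h0]
    simp [Real.zero_rpow (ne_of_gt hσ0)]
  · -- W > 0
    have hW : 0 < (1-α)*P+β := h0
    have hWβ : (0:ℝ) < ((1-α)*P+β)/β := by positivity
    have e0 : (α:ℝ)^(2:ℝ) = α^2 := by
      rw [show (2:ℝ) = ((2:ℕ):ℝ) by norm_num, Real.rpow_natCast]
    have e1 : (α^2 * ((1-α)*P+β)/β) = α^(2:ℝ) * (((1-α)*P+β)/β) := by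
      rw [e0]; ring
    rw [e1, Real.mul_rpow (by rw [e0]; positivity) (le_of_lt hWβ)]
    rw [← Real.rpow_mul (le_of_lt hα0)]
    rw [show (2:ℝ) * σ = (α+1)/(α-1) + 1 by rw [hσ]; field_simp; ring]
    rw [Real.rpow_add hα0, Real.rpow_one]
    rw [hσs, Real.rpow_add hWβ s 1, Real.rpow_one]
    field_simp
end

section
/- Let F be an MHR distribution (hazard rate h(v)=f(v)/(1-F(v)) non-decreasing, equivalently cumulative hazard H convex) with F(0)=0, and let φ(v)=v-1/h(v) be its virtual value. Then for any point P in the support with h(P)>0: 1 - F(φ(P)) ≤ e·(1 - F(P)). -/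
/-- For an MHR distribution, 1 - F(φ(P)) ≤ e·(1 - F(P)). -/
theorem stmt12 (vbar : ℝ) (F f : ℝ → ℝ) (P : ℝ)
    (hF0 : F 0 = 0)
    (hf : ∀ v ∈ Set.Icc (0:ℝ) vbar, HasDerivWithinAt F (f v) (Set.Icc 0 vbar) v)
    (hfc : ContinuousOn f (Set.Icc 0 vbar))
    (hfpos : ∀ v ∈ Set.Icc (0:ℝ) vbar, 0 < f v)
    (hFlt : ∀ v ∈ Set.Icc (0:ℝ) vbar, F v < 1)
    (hMHR : MonotoneOn (fun v => f v / (1 - F v)) (Set.Icc 0 vbar))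
    (hP : P ∈ Set.Icc (0:ℝ) vbar)
    (hφ : P - (1 - F P)/(f P) ∈ Set.Icc (0:ℝ) vbar) :
    1 - F (P - (1 - F P)/(f P)) ≤ Real.exp 1 * (1 - F P) := by
  set q := P - (1 - F P)/(f P) with hqdef
  have hfP := hfpos P hP
  have hFP := hFlt P hP
  have h1 : (0:ℝ) < 1 - F P := by linarith
  have hdivpos : 0 < (1 - F P) / f P := div_pos h1 hfP
  have hlt : q < P := by simp only [hqdef]; linarith
  set G : ℝ → ℝ := fun v => -Real.log (1 - F v) with hG
  have hGd : ∀ v ∈ Set.Icc (0:ℝ) vbar,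
      HasDerivWithinAt G (f v / (1 - F v)) (Set.Icc 0 vbar) v := by
    intro v hv
    have h1v : (0:ℝ) < 1 - F v := by have := hFlt v hv; linarith
    have hsub : HasDerivWithinAt (fun v => 1 - F v) (-f v) (Set.Icc 0 vbar) v :=
      (hf v hv).const_sub 1
    have hl := (hsub.log (ne_of_gt h1v)).neg
    rw [show f v / (1 - F v) = -(-f v / (1 - F v)) by ring]
    exact hl
  have hGc : ContinuousOn G (Set.Icc 0 vbar) := fun v hv => (hGd v hv).continuousWithinAt
  have hsub : Set.Icc q P ⊆ Set.Icc 0 vbar := Set.Icc_subset_Icc hφ.1 hP.2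
  have hIoo : ∀ x ∈ Set.Ioo q P, HasDerivAt G (f x / (1 - F x)) x := by
    intro x hx
    have hxI : x ∈ Set.Icc (0:ℝ) vbar := ⟨le_of_lt (lt_of_le_of_lt hφ.1 hx.1),
      le_of_lt (lt_of_lt_of_le hx.2 hP.2)⟩
    have hnb : Set.Icc (0:ℝ) vbar ∈ nhds x :=
      Icc_mem_nhds (lt_of_le_of_lt hφ.1 hx.1) (lt_of_lt_of_le hx.2 hP.2)
    exact (hGd x hxI).hasDerivAt hnb
  obtain ⟨c, hc, hceq⟩ := exists_hasDerivAt_eq_slope G (fun v => f v / (1 - F v)) hlt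
    (hGc.mono hsub) hIoo
  have hcI : c ∈ Set.Icc (0:ℝ) vbar := hsub ⟨le_of_lt hc.1, le_of_lt hc.2⟩
  have hmono : f c / (1 - F c) ≤ f P / (1 - F P) := hMHR hcI hP (le_of_lt hc.2)
  have hslope : (G P - G q) / (P - q) ≤ f P / (1 - F P) := by rw [hceq] at hmono; exact hmono
  have hPq : P - q = (1 - F P) / f P := by simp [hqdef]
  have hGle : G P - G q ≤ 1 := by
    have hpos : 0 < P - q := by linarith
    have := (div_le_iff₀ hpos).mp hslope
    rw [hPq] at this
    calc G P - G q ≤ f P / (1 - F P) * ((1 - F P) / f P) := this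
      _ = 1 := by field_simp
  -- translate back
  have hFq := hFlt q (hsub ⟨le_refl q, le_of_lt hlt⟩)
  have h1q : (0:ℝ) < 1 - F q := by linarith
  have hlog : Real.log (1 - F q) ≤ 1 + Real.log (1 - F P) := by
    simp only [hG] at hGle; linarith
  calc 1 - F q = Real.exp (Real.log (1 - F q)) := (Real.exp_log h1q).symm
    _ ≤ Real.exp (1 + Real.log (1 - F P)) := Real.exp_le_exp.mpr hlog
    _ = Real.exp 1 * (1 - F P) := by rw [Real.exp_add, Real.exp_log h1]
end

section
/- Suppose the buyer's value is uniform on [0,1] and the seller has regular cost distribution G with density g. Let y = min{φ_S^{-1}(1), c̄}. Then the optimal Myerson revenue satisfies OPT ≤ (1-y)²G(y)/8 + (1/8)∫₀^y (1-c)² g(c) dc. -/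
lemma inner_int (t : ℝ) :
    ∫ v in ((1 + t)/2)..(1:ℝ), (2*v - 1 - t) = (1-t)^2/4 := by
  have h : ∀ v ∈ Set.uIcc ((1+t)/2) (1:ℝ),
      HasDerivAt (fun v => v^2 - (1+t)*v) (2*v - 1 - t) v := by
    intro v _
    have := (hasDerivAt_pow 2 v).sub ((hasDerivAt_id v).const_mul (1+t))
    exact this.congr_deriv (by norm_num; ring)
  rw [intervalIntegral.integral_eq_sub_of_hasDerivAt h
    (by apply Continuous.intervalIntegrable; continuity)]
  ring

/-- Upper bound on Myerson's optimal revenue with a uniform [0,1] buyer and a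
regular seller, where y = min{φ_S⁻¹(1), c̄}. -/
theorem stmt17 (cbar y : ℝ) (G g : ℝ → ℝ)
    (hcbar : 0 < cbar)
    (hG0 : G 0 = 0)
    (hg : ∀ c ∈ Set.Icc (0:ℝ) cbar, HasDerivWithinAt G (g c) (Set.Icc 0 cbar) c)
    (hgpos : ∀ c ∈ Set.Icc (0:ℝ) cbar, 0 < g c)
    (hgc : ContinuousOn g (Set.Icc 0 cbar))
    (hGpos : ∀ c ∈ Set.Icc (0:ℝ) cbar, 0 ≤ G c)
    (hreg : MonotoneOn (fun c => c + G c / g c) (Set.Icc 0 cbar))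
    (hy : y ∈ Set.Icc (0:ℝ) cbar)
    (hy1 : ∀ c ∈ Set.Icc (0:ℝ) y, c + G c / g c ≤ 1) :
    (∫ c in (0:ℝ)..y,
        (∫ v in ((1 + (c + G c / g c))/2)..(1:ℝ), (2*v - 1 - (c + G c/g c))) * g c)
      ≤ (1-y)^2 * G y / 8 + (1/8) * ∫ c in (0:ℝ)..y, (1-c)^2 * g c := by
  obtain ⟨hy0, hycbar⟩ := hy
  have hsub : Set.Icc (0:ℝ) y ⊆ Set.Icc 0 cbar := Set.Icc_subset_Icc le_rfl hycbar
  have hGcont : ContinuousOn G (Set.Icc 0 cbar) := fun c hc => (hg c hc).continuousWithinAt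
  have hgc' : ContinuousOn g (Set.Icc 0 y) := hgc.mono hsub
  have hGc' : ContinuousOn G (Set.Icc 0 y) := hGcont.mono hsub
  have hgne : ∀ c ∈ Set.Icc (0:ℝ) y, g c ≠ 0 := fun c hc => (hgpos c (hsub hc)).ne'
  have hφ : ContinuousOn (fun c => c + G c / g c) (Set.Icc 0 y) :=
    continuousOn_id.add (hGc'.div hgc' hgne)
  have huIcc : Set.uIcc (0:ℝ) y = Set.Icc 0 y := Set.uIcc_of_le hy0
  have hint1 : IntervalIntegrable (fun c => (1 - (c + G c / g c))^2/4 * g c)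
      MeasureTheory.volume 0 y := by
    apply ContinuousOn.intervalIntegrable
    rw [huIcc]
    exact (((continuousOn_const.sub hφ).pow 2).div_const 4).mul hgc'
  have hint2 : IntervalIntegrable (fun c => (1-c)^2 * g c) MeasureTheory.volume 0 y := by
    apply ContinuousOn.intervalIntegrable; rw [huIcc]
    exact ((continuousOn_const.sub continuousOn_id).pow 2).mul hgc'
  have hint3 : IntervalIntegrable (fun c => ((1-c)^2 * g c - 2*(1-c)*G c)/8)
      MeasureTheory.volume 0 y := by
    apply ContinuousOn.intervalIntegrable; rw [huIcc]
    exact ((((continuousOn_const.sub continuousOn_id).pow 2).mul hgc').sub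
      ((continuousOn_const.mul (continuousOn_const.sub continuousOn_id)).mul hGc')).div_const 8
  have hFTC : ∫ c in (0:ℝ)..y, ((1-c)^2 * g c - 2*(1-c)*G c)/8 = (1-y)^2 * G y / 8 := by
    have hderiv : ∀ x ∈ Set.Ioo (0:ℝ) y,
        HasDerivAt (fun c => (1-c)^2 * G c / 8) (((1-x)^2 * g x - 2*(1-x)*G x)/8) x := by
      intro x hx
      have hxm : x ∈ Set.Icc (0:ℝ) cbar := ⟨hx.1.le, (hx.2.trans_le hycbar).le⟩
      have hG' : HasDerivAt G (g x) x :=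
        (hg x hxm).hasDerivAt (Icc_mem_nhds hx.1 (hx.2.trans_le hycbar))
      have h1 : HasDerivAt (fun c : ℝ => (1-c)^2) (2*(1-x)^1*(-1)) x :=
        ((hasDerivAt_id x).const_sub 1).pow 2 |>.congr_deriv (by simp only [id_eq]; ring)
      have := (h1.mul hG').div_const 8
      exact this.congr_deriv (by ring)
    have hcont : ContinuousOn (fun c => (1-c)^2 * G c / 8) (Set.Icc 0 y) :=
      (((continuousOn_const.sub continuousOn_id).pow 2).mul hGc').div_const 8
    rw [intervalIntegral.integral_eq_sub_of_hasDerivAt_of_le hy0 hcont hderiv hint3]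
    simp [hG0]
  simp only [inner_int]
  have hmono : (∫ c in (0:ℝ)..y, (1 - (c + G c / g c))^2/4 * g c)
      ≤ ∫ c in (0:ℝ)..y, ((1/8)*((1-c)^2 * g c) + ((1-c)^2 * g c - 2*(1-c)*G c)/8) := by
    apply intervalIntegral.integral_mono_on hy0 hint1 ((hint2.const_mul (1/8)).add hint3)
    intro c hc
    have hq1 : G c / g c ≤ 1 - c := by have := hy1 c hc; linarith
    have hq0 : 0 ≤ G c / g c := div_nonneg (hGpos c (hsub hc)) (hgpos c (hsub hc)).le
    have hqg : G c / g c * g c = G c := div_mul_cancel₀ _ (hgne c hc)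
    nlinarith [mul_nonneg (mul_nonneg hq0 (hgpos c (hsub hc)).le)
      (sub_nonneg.2 hq1), (hgpos c (hsub hc)).le]
  rw [intervalIntegral.integral_add (hint2.const_mul (1/8)) hint3,
    intervalIntegral.integral_const_mul, hFTC] at hmono
  linarith
end
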